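/- Let p ∈ ℕ, let α₁ > α₂ > ⋯ > α_p be distinct real numbers, and let m₁,…,m_p be positive integers with Σ m_i = k. If (ξ₁,…,ξ_k) ∈ ℝ^k is nonzero, then the function F(z) = Σ_{ℓ=1}^p P_ℓ(z) e^{α_ℓ z}, where P_ℓ is the polynomial of degree < m_ℓ with coefficients given by the ℓ-th block of ξ, has at most k − 1 distinct real roots. -/

import Mathlib

open Polynomial

lemma rolle_finset (f : ℝ → ℝ) (hf : Differentiable ℝ f) :
    ∀ s : Finset ℝ, (∀ x ∈ s, f x = 0) →
    ∃ t : Finset ℝ, s.card ≤ t.card + 1 ∧ (∀ x ∈ t, deriv f x = 0) ∧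
      ∀ x ∈ t, ∃ y ∈ s, y < x := by
  intro s
  induction s using Finset.strongInduction with
  | _ s ih =>
    intro hs
    by_cases h1 : s.card ≤ 1
    · exact ⟨∅, by simpa using h1, by simp, by simp⟩
    · push_neg at h1
      have hne : s.Nonempty := Finset.card_pos.mp (by omega)
      set a := s.min' hne with ha_def
      have ha : a ∈ s := s.min'_mem hne
      set s' := s.erase a with hs'
      have hcard' : s'.card = s.card - 1 := Finset.card_erase_of_mem ha
      have hne' : s'.Nonempty := Finset.card_pos.mp (by omega)
      set b := s'.min' hne' with hb_def
      have hb' : b ∈ s' := s'.min'_mem hne'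
      have hbs : b ∈ s := Finset.mem_of_mem_erase hb'
      have hab : a < b :=
        lt_of_le_of_ne (s.min'_le b hbs) (Ne.symm (Finset.ne_of_mem_erase hb'))
      obtain ⟨c, hc, hc0⟩ := exists_deriv_eq_zero hab hf.continuous.continuousOn
        (by rw [hs a ha, hs b hbs])
      obtain ⟨t', h1', h2', h3'⟩ := ih s' (Finset.erase_ssubset ha)
        (fun x hx => hs x (Finset.mem_of_mem_erase hx))
      have hcnot : c ∉ t' := by
        intro hct
        obtain ⟨y, hy, hyc⟩ := h3' c hct
        exact absurd hc.2 (not_lt.mpr (le_of_lt (lt_of_le_of_lt (s'.min'_le y hy) hyc)))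
      refine ⟨insert c t', ?_, ?_, ?_⟩
      · rw [Finset.card_insert_of_notMem hcnot]; omega
      · intro x hx
        rcases Finset.mem_insert.mp hx with rfl | hx
        · exact hc0
        · exact h2' x hx
      · intro x hx
        rcases Finset.mem_insert.mp hx with rfl | hx
        · exact ⟨a, ha, hc.1⟩
        · obtain ⟨y, hy, hyx⟩ := h3' x hx
          exact ⟨y, Finset.mem_of_mem_erase hy, hyx⟩

lemma expPoly_card_lt : ∀ k : ℕ, ∀ p : ℕ, ∀ α : Fin p → ℝ, Function.Injective α →
    ∀ P : Fin p → Polynomial ℝ, ∀ d : Fin p → ℕ,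
    (∀ ℓ, (P ℓ).degree < (d ℓ : ℕ)) → (∑ ℓ, d ℓ) ≤ k → (∃ ℓ, P ℓ ≠ 0) →
    ∀ s : Finset ℝ, (∀ z ∈ s, ∑ ℓ, (P ℓ).eval z * Real.exp (α ℓ * z) = 0) →
    s.card < k := by
  intro k
  induction k using Nat.strong_induction_on with
  | _ k ih =>
    intro p α hα P d hdeg hsum hex s hs
    obtain ⟨ℓ₀, hℓ₀⟩ := hex
    have hd0 : 1 ≤ d ℓ₀ := by
      have h0 : (0 : WithBot ℕ) ≤ (P ℓ₀).degree := zero_le_degree_iff.mpr hℓ₀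
      have h1 : (0 : WithBot ℕ) < (d ℓ₀ : ℕ) := lt_of_le_of_lt h0 (hdeg ℓ₀)
      exact_mod_cast h1
    have hk1 : 1 ≤ k := le_trans hd0 (le_trans (Finset.single_le_sum (fun _ _ => Nat.zero_le _) (Finset.mem_univ ℓ₀)) hsum)
    set β : Fin p → ℝ := fun ℓ => α ℓ - α ℓ₀ with hβ
    set Q : Fin p → Polynomial ℝ := fun ℓ => derivative (P ℓ) + C (β ℓ) * P ℓ with hQdef
    by_cases hQ : ∀ ℓ, Q ℓ = 0
    · -- F = c * exp, no zeros
      have hPz : ∀ ℓ, ℓ ≠ ℓ₀ → P ℓ = 0 := by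
        intro ℓ hne
        by_contra hP
        have hβne : β ℓ ≠ 0 := sub_ne_zero.mpr (fun h => hne (hα h))
        have h1 : derivative (P ℓ) = -(C (β ℓ) * P ℓ) :=
          eq_neg_of_add_eq_zero_left (hQ ℓ)
        have h2 : (derivative (P ℓ)).degree = (P ℓ).degree := by
          rw [h1, degree_neg, degree_C_mul hβne]
        exact absurd h2 (ne_of_lt (degree_derivative_lt hP))
      have hP0 : derivative (P ℓ₀) = 0 := by
        have := hQ ℓ₀
        simpa [hQdef, hβ] using this
      have hconst : P ℓ₀ = C ((P ℓ₀).coeff 0) :=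
        eq_C_of_natDegree_eq_zero (natDegree_eq_zero_of_derivative_eq_zero hP0)
      have hc : (P ℓ₀).coeff 0 ≠ 0 := by
        intro h
        rw [h, map_zero] at hconst
        exact hℓ₀ hconst
      have : s = ∅ := by
        by_contra hne
        obtain ⟨z, hz⟩ := Finset.nonempty_iff_ne_empty.mpr hne
        have h0 := hs z hz
        rw [Finset.sum_eq_single ℓ₀ (fun ℓ _ hne => by rw [hPz ℓ hne]; simp)
          (fun h => absurd (Finset.mem_univ ℓ₀) h)] at h0
        rw [hconst, eval_C] at h0
        rcases mul_eq_zero.mp h0 with h | h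
        · exact hc h
        · exact (Real.exp_ne_zero _) h
      rw [this]
      simp; omega
    · push_neg at hQ
      set d' : Fin p → ℕ := Function.update d ℓ₀ (d ℓ₀ - 1) with hd'
      set H : ℝ → ℝ := fun z => ∑ ℓ, (P ℓ).eval z * Real.exp (β ℓ * z) with hH
      have hderiv : ∀ z, HasDerivAt H (∑ ℓ, (Q ℓ).eval z * Real.exp (β ℓ * z)) z := by
        intro z
        apply HasDerivAt.fun_sum
        intro ℓ _
        have h1 : HasDerivAt (fun z => (P ℓ).eval z) ((derivative (P ℓ)).eval z) z :=
          (P ℓ).hasDerivAt z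
        have h2 : HasDerivAt (fun z => Real.exp (β ℓ * z)) (Real.exp (β ℓ * z) * β ℓ) z := by
          simpa using ((hasDerivAt_id z).const_mul (β ℓ)).exp
        have := h1.fun_mul h2
        convert this using 1
        · rfl
        simp [hQdef]
        ring
      have hHdiff : Differentiable ℝ H := fun z => (hderiv z).differentiableAt
      have hHzero : ∀ z ∈ s, H z = 0 := by
        intro z hz
        have h0 := hs z hz
        have : H z = (∑ ℓ, (P ℓ).eval z * Real.exp (α ℓ * z)) * Real.exp (-(α ℓ₀ * z)) := by
          rw [Finset.sum_mul]
          apply Finset.sum_congr rfl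
          intro ℓ _
          rw [mul_assoc, ← Real.exp_add]
          simp only [hβ]
          ring_nf
        rw [this, h0, zero_mul]
      obtain ⟨t, ht1, ht2, _⟩ := rolle_finset H hHdiff s hHzero
      have htz : ∀ z ∈ t, ∑ ℓ, (Q ℓ).eval z * Real.exp (β ℓ * z) = 0 := by
        intro z hz
        rw [← (hderiv z).deriv]
        exact ht2 z hz
      have hβinj : Function.Injective β := by
        intro a b h
        exact hα (by simpa [hβ, sub_left_inj] using h)
      have hdeg' : ∀ ℓ, (Q ℓ).degree < (d' ℓ : ℕ) := by
        intro ℓ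
        by_cases hne : ℓ = ℓ₀
        · subst hne
          have hQ0 : Q ℓ = derivative (P ℓ) := by simp [hQdef, hβ]
          rw [hQ0, hd', Function.update_self]
          by_cases hder : derivative (P ℓ) = 0
          · rw [hder, degree_zero]
            exact bot_lt_iff_ne_bot.mpr (by simp)
          · have hPne : P ℓ ≠ 0 := fun h => hder (by rw [h]; simp)
            have hn1 : (P ℓ).natDegree ≠ 0 := fun h =>
              hder (derivative_of_natDegree_zero h)
            have h3 : (derivative (P ℓ)).natDegree < (P ℓ).natDegree :=
              natDegree_derivative_lt hn1
            have h4 : (P ℓ).natDegree < d ℓ :=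
              (natDegree_lt_iff_degree_lt hPne).mpr (hdeg ℓ)
            exact (natDegree_lt_iff_degree_lt hder).mp (by omega)
        · rw [hd', Function.update_of_ne hne]
          have hCP : (C (β ℓ) * P ℓ).degree ≤ (P ℓ).degree := by
            calc (C (β ℓ) * P ℓ).degree ≤ (C (β ℓ)).degree + (P ℓ).degree :=
                  degree_mul_le _ _
              _ ≤ 0 + (P ℓ).degree := add_le_add_left degree_C_le _
              _ = (P ℓ).degree := zero_add _
          calc (Q ℓ).degree ≤ max (derivative (P ℓ)).degree (C (β ℓ) * P ℓ).degree :=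
                degree_add_le _ _
            _ ≤ max (P ℓ).degree (P ℓ).degree := max_le_max degree_derivative_le hCP
            _ = (P ℓ).degree := max_self _
            _ < (d ℓ : ℕ) := hdeg ℓ
      have hsum' : ∑ ℓ, d' ℓ ≤ k - 1 := by
        have h1 : ∑ ℓ, d' ℓ = (d ℓ₀ - 1) + ∑ ℓ ∈ Finset.univ.erase ℓ₀, d ℓ := by
          rw [hd']
          rw [← Finset.add_sum_erase _ _ (Finset.mem_univ ℓ₀)]
          congr 1
          · exact Function.update_self _ _ _
          · apply Finset.sum_congr rfl
            intro ℓ hℓ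
            exact Function.update_of_ne (Finset.ne_of_mem_erase hℓ) _ _
        have h2 : ∑ ℓ, d ℓ = d ℓ₀ + ∑ ℓ ∈ Finset.univ.erase ℓ₀, d ℓ :=
          (Finset.add_sum_erase _ _ (Finset.mem_univ ℓ₀)).symm
        omega
      have hcard := ih (k-1) (by omega) p β hβinj Q d' hdeg' hsum' hQ t htz
      omega

/-- a nonzero exponential polynomial `F(z) = Σ_ℓ P_ℓ(z) e^{α_ℓ z}` with
distinct exponents `α₁ > ⋯ > α_p` and `deg P_ℓ < m_ℓ` has at most `k - 1` distinct real
roots, where `k = Σ_ℓ m_ℓ`. -/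
theorem stmt7 (p : ℕ) (α : Fin p → ℝ) (hα : StrictAnti α)
    (m : Fin p → ℕ) (hm : ∀ ℓ, 0 < m ℓ) (k : ℕ) (hk : ∑ ℓ, m ℓ = k)
    (ξ : (Σ ℓ : Fin p, Fin (m ℓ)) → ℝ) (hξ : ξ ≠ 0)
    (F : ℝ → ℝ)
    (hF : ∀ z, F z = ∑ ℓ : Fin p,
      (∑ i : Fin (m ℓ), ξ ⟨ℓ, i⟩ * z ^ (i : ℕ)) * Real.exp (α ℓ * z))
    (s : Finset ℝ) (hs : ∀ z ∈ s, F z = 0) : s.card < k := by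
  set P : Fin p → Polynomial ℝ := fun ℓ => ∑ i : Fin (m ℓ), C (ξ ⟨ℓ, i⟩) * X ^ (i : ℕ)
    with hP
  have hcoeff : ∀ ℓ (n : ℕ), (P ℓ).coeff n = ∑ i : Fin (m ℓ), if n = (i : ℕ) then ξ ⟨ℓ, i⟩ else 0 := by
    intro ℓ n
    rw [hP]
    rw [finset_sum_coeff]
    apply Finset.sum_congr rfl
    intro i _
    rw [coeff_C_mul, coeff_X_pow]
    simp
  have heval : ∀ ℓ (z : ℝ), (P ℓ).eval z = ∑ i : Fin (m ℓ), ξ ⟨ℓ, i⟩ * z ^ (i : ℕ) := by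
    intro ℓ z
    rw [hP, eval_finset_sum]
    simp
  have hdeg : ∀ ℓ, (P ℓ).degree < (m ℓ : ℕ) := by
    intro ℓ
    rw [degree_lt_iff_coeff_zero]
    intro n hn
    rw [hcoeff]
    apply Finset.sum_eq_zero
    intro i _
    have : (i : ℕ) ≠ n := by
      have := i.isLt
      intro h
      rw [h] at this
      exact absurd hn (not_le.mpr (by exact_mod_cast this))
    simp [Ne.symm this]
  have hex : ∃ ℓ, P ℓ ≠ 0 := by
    obtain ⟨⟨ℓ, i⟩, hj⟩ := Function.ne_iff.mp hξ
    refine ⟨ℓ, fun h => hj ?_⟩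
    have := hcoeff ℓ (i : ℕ)
    rw [h, coeff_zero] at this
    rw [Finset.sum_eq_single i (fun b _ hb => by
      simp [Fin.val_eq_val, Ne.symm hb]) (fun h => absurd (Finset.mem_univ i) h)] at this
    simpa using this.symm
  have := expPoly_card_lt k p α hα.injective P m hdeg (le_of_eq hk) hex s
    (fun z hz => by rw [← hs z hz, hF z]; exact Finset.sum_congr rfl fun ℓ _ => by rw [heval])
  exact this
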